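/- Let n, r, s be positive integers, γ = gcd(r, s), r_γ = r/γ, s_γ = s/γ, β_γ = n mod γ, and n_γ = (n − β_γ)/γ, and assume n_γ ≥ 1. Then the characteristic polynomial of T_n(g_{r,s}) factors as charpoly(T_n(g_{r,s})) = charpoly(T_{n_γ+1}(g_{r_γ,s_γ}))^{β_γ} · charpoly(T_{n_γ}(g_{r_γ,s_γ}))^{γ−β_γ}. Equivalently, T_n(g_{r,s}) is similar via a permutation matrix to a block-diagonal matrix with β_γ blocks equal to T_{n_γ+1}(g_{r_γ,s_γ}) and γ − β_γ blocks equal to T_{n_γ}(g_{r_γ,s_γ}). -/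
import Mathlib

open Matrix Polynomial

/-- The `n × n` Toeplitz matrix generated by the symbol
`g_{r,s}(θ) = e^{irθ} + e^{-isθ}`. -/
noncomputable def Tg (n r s : ℕ) : Matrix (Fin n) (Fin n) ℂ :=
  Matrix.of fun i j =>
    if (i : ℤ) - (j : ℤ) = (r : ℤ) ∨ (i : ℤ) - (j : ℤ) = -(s : ℤ) then 1 else 0

lemma Tg_congr {a b r1 r2 s1 s2 : ℕ} (h : a = b) (h2 : r1 = r2) (h3 : s1 = s2) :
    (Tg a r1 s1).charpoly = (Tg b r2 s2).charpoly := by subst h h2 h3; rfl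

/-- block size -/
def mfun (nγ β c : ℕ) : ℕ := if c < β then nγ + 1 else nγ

def bfun (γ nγ β : ℕ) (hγ : 0 < γ) : Fin (nγ * γ + β) → Fin γ :=
  fun i => ⟨(i : ℕ) % γ, Nat.mod_lt _ hγ⟩

lemma mem_bound {γ nγ β c k : ℕ} (hβ : β < γ) (hc : c < γ) (hk : k < mfun nγ β c) :
    k * γ + c < nγ * γ + β := by
  unfold mfun at hk
  split at hk
  · -- c < β, k ≤ nγ
    have h1 : k * γ ≤ nγ * γ := Nat.mul_le_mul_right γ (by omega)
    omega
  · -- c ≥ β, k + 1 ≤ nγ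
    have h1 : (k + 1) * γ ≤ nγ * γ := Nat.mul_le_mul_right γ (by omega)
    have : k * γ + γ ≤ nγ * γ := by linarith [h1]; 
    omega

lemma div_bound {γ nγ β : ℕ} (hγ : 0 < γ) (hβ : β < γ) (i : ℕ) (hi : i < nγ * γ + β) :
    i / γ < mfun nγ β (i % γ) := by
  unfold mfun
  have hmod := Nat.div_add_mod i γ
  have hmlt := Nat.mod_lt i hγ
  split
  · -- i % γ < β : need i / γ < nγ + 1
    rw [Nat.div_lt_iff_lt_mul hγ]
    calc i < nγ * γ + β := hi
    _ ≤ nγ * γ + γ := by omega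
    _ = (nγ + 1) * γ := by ring
  · -- i % γ ≥ β : need i / γ < nγ
    by_contra hcon
    push_neg at hcon
    have h1 : γ * nγ ≤ γ * (i / γ) := Nat.mul_le_mul_left γ hcon
    have h2 : nγ * γ = γ * nγ := Nat.mul_comm _ _
    omega

/-- the equivalence between a residue-class block and `Fin (mfun nγ β c)`. -/
def blockEquiv (γ nγ β : ℕ) (hγ : 0 < γ) (hβ : β < γ) (c : Fin γ) :
    {i : Fin (nγ * γ + β) // bfun γ nγ β hγ i = c} ≃ Fin (mfun nγ β (c : ℕ)) where
  toFun i := ⟨(i : Fin (nγ * γ + β)) / γ, by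
    have h := div_bound hγ hβ (i : Fin (nγ * γ + β)) (i.1.isLt)
    have hc : ((i : Fin (nγ * γ + β)) : ℕ) % γ = (c : ℕ) := congrArg Fin.val i.2
    rwa [hc] at h⟩
  invFun k := ⟨⟨(k : ℕ) * γ + (c : ℕ), mem_bound hβ c.isLt k.isLt⟩, by
    apply Fin.ext
    show ((k : ℕ) * γ + (c : ℕ)) % γ = (c : ℕ)
    rw [Nat.add_comm, Nat.add_mul_mod_self_right, Nat.mod_eq_of_lt c.isLt]⟩
  left_inv i := by
    apply Subtype.ext
    apply Fin.ext
    show ((i : Fin (nγ * γ + β)) : ℕ) / γ * γ + (c : ℕ) = ((i : Fin (nγ * γ + β)) : ℕ)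
    have hc : ((i : Fin (nγ * γ + β)) : ℕ) % γ = (c : ℕ) := congrArg Fin.val i.2
    have hd := Nat.div_add_mod ((i : Fin (nγ * γ + β)) : ℕ) γ
    have h2 : ((i : Fin (nγ * γ + β)) : ℕ) / γ * γ = γ * (((i : Fin (nγ * γ + β)) : ℕ) / γ) :=
      Nat.mul_comm _ _
    omega
  right_inv k := by
    apply Fin.ext
    show ((k : ℕ) * γ + (c : ℕ)) / γ = (k : ℕ)
    rw [Nat.mul_comm, Nat.mul_add_div hγ, Nat.div_eq_of_lt c.isLt, Nat.add_zero]

lemma cond_iff (γ rγ sγ : ℕ) (hγ : 0 < γ) (k l c : ℕ) :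
    (((k*γ+c : ℕ) : ℤ) - ((l*γ+c : ℕ) : ℤ) = ((rγ*γ : ℕ) : ℤ) ∨
      ((k*γ+c : ℕ) : ℤ) - ((l*γ+c : ℕ) : ℤ) = -((sγ*γ : ℕ) : ℤ))
    ↔ ((k : ℤ) - (l : ℤ) = (rγ : ℤ) ∨ (k : ℤ) - (l : ℤ) = -(sγ : ℤ)) := by
  have hγ' : (γ : ℤ) ≠ 0 := by exact_mod_cast hγ.ne'
  have e1 : ((k*γ+c : ℕ) : ℤ) - ((l*γ+c : ℕ) : ℤ) = ((k : ℤ) - l) * γ := by push_cast; ring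
  have e2 : ((rγ*γ : ℕ) : ℤ) = (rγ : ℤ) * γ := by push_cast; ring
  have e3 : (-((sγ*γ : ℕ) : ℤ)) = (-(sγ : ℤ)) * γ := by push_cast; ring
  rw [e1, e2, e3, mul_left_inj' hγ', mul_left_inj' hγ']

lemma mod_eq_of_dvd {γ : ℕ} (hγ : 0 < γ) {i j : ℕ} (h : (γ : ℤ) ∣ (i : ℤ) - (j : ℤ)) :
    i % γ = j % γ := by
  have h2 : ((i : ℤ) - (j : ℤ)) % γ = 0 := Int.emod_eq_zero_of_dvd h
  have h3 : (i : ℤ) % γ = (j : ℤ) % γ := Int.emod_eq_emod_iff_emod_sub_eq_zero.mpr h2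
  exact_mod_cast h3

set_option maxHeartbeats 1000000 in
lemma key (γ rγ sγ nγ β : ℕ) (hγ : 0 < γ) (hβ : β < γ) (hnγ : 1 ≤ nγ) :
    (Tg (nγ*γ+β) (rγ*γ) (sγ*γ)).charpoly
      = (Tg (nγ+1) rγ sγ).charpoly ^ β * (Tg nγ rγ sγ).charpoly ^ (γ - β) := by
  set M := Tg (nγ*γ+β) (rγ*γ) (sγ*γ) with hM
  have hbt : M.BlockTriangular (bfun γ nγ β hγ) := by
    intro i j hlt
    have hne : (i : ℕ) % γ ≠ (j : ℕ) % γ := by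
      intro hcon
      exact absurd (Fin.ext hcon : bfun γ nγ β hγ i = bfun γ nγ β hγ j)
        (by intro hc; rw [hc] at hlt; exact lt_irrefl _ hlt)
    show (if ((i : ℕ) : ℤ) - ((j : ℕ) : ℤ) = ((rγ*γ : ℕ) : ℤ) ∨
        ((i : ℕ) : ℤ) - ((j : ℕ) : ℤ) = -((sγ*γ : ℕ) : ℤ) then (1:ℂ) else 0) = 0
    rw [if_neg]
    rintro (h | h)
    · exact hne (mod_eq_of_dvd hγ ⟨rγ, by rw [h]; push_cast; ring⟩)
    · exact hne (mod_eq_of_dvd hγ ⟨-sγ, by rw [h]; push_cast; ring⟩)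
  have h1 := hbt.charpoly
  rw [h1]
  refine (Finset.prod_congr (Finset.eq_univ_of_forall fun c => ?_) (fun _ _ => rfl)).trans ?_
  · have hcn : (c : ℕ) < nγ*γ+β := by
      have hle : γ ≤ nγ*γ := Nat.le_mul_of_pos_left γ hnγ
      have := c.isLt; omega
    have hb : bfun γ nγ β hγ ⟨(c : ℕ), hcn⟩ = c := Fin.ext (Nat.mod_eq_of_lt c.isLt)
    rw [← hb]
    have := Finset.mem_image_of_mem (bfun γ nγ β hγ) (Finset.mem_univ (⟨(c : ℕ), hcn⟩ : Fin (nγ*γ+β)))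
    convert this using 2
  have hblock : ∀ c : Fin γ, (M.toSquareBlock (bfun γ nγ β hγ) c).charpoly
      = (Tg (mfun nγ β (c : ℕ)) rγ sγ).charpoly := by
    intro c
    rw [← Matrix.charpoly_reindex (blockEquiv γ nγ β hγ hβ c)]
    congr 1
    ext k l
    show M (((blockEquiv γ nγ β hγ hβ c).symm k) : Fin (nγ*γ+β))
        (((blockEquiv γ nγ β hγ hβ c).symm l) : Fin (nγ*γ+β)) = Tg (mfun nγ β (c : ℕ)) rγ sγ k l
    show (if (((k : ℕ)*γ+(c : ℕ) : ℕ) : ℤ) - (((l : ℕ)*γ+(c : ℕ) : ℕ) : ℤ) = ((rγ*γ : ℕ) : ℤ) ∨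
        (((k : ℕ)*γ+(c : ℕ) : ℕ) : ℤ) - (((l : ℕ)*γ+(c : ℕ) : ℕ) : ℤ) = -((sγ*γ : ℕ) : ℤ)
        then (1:ℂ) else 0)
      = (if ((k : ℕ) : ℤ) - ((l : ℕ) : ℤ) = (rγ : ℤ) ∨ ((k : ℕ) : ℤ) - ((l : ℕ) : ℤ) = -(sγ : ℤ)
        then (1:ℂ) else 0)
    exact if_congr (cond_iff γ rγ sγ hγ _ _ _) rfl rfl
  have h2 : ∀ c : Fin γ, (Tg (mfun nγ β (c : ℕ)) rγ sγ).charpoly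
      = if (c : ℕ) < β then (Tg (nγ+1) rγ sγ).charpoly else (Tg nγ rγ sγ).charpoly := by
    intro c
    by_cases h : (c : ℕ) < β
    · rw [if_pos h]; exact Tg_congr (by simp [mfun, h]) rfl rfl
    · rw [if_neg h]; exact Tg_congr (by simp [mfun, h]) rfl rfl
  have hfin : (∏ c : Fin γ, (if (c : ℕ) < β then (Tg (nγ+1) rγ sγ).charpoly
        else (Tg nγ rγ sγ).charpoly))
      = (Tg (nγ+1) rγ sγ).charpoly ^ β * (Tg nγ rγ sγ).charpoly ^ (γ - β) := by
    rw [Fin.prod_univ_eq_prod_range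
      (fun i => if i < β then (Tg (nγ+1) rγ sγ).charpoly else (Tg nγ rγ sγ).charpoly) γ]
    have hsplit : γ = β + (γ - β) := by omega
    conv_lhs => rw [hsplit]
    rw [Finset.prod_range_add]
    congr 1
    · rw [Finset.prod_congr rfl (fun i hi => if_pos (Finset.mem_range.mp hi)),
        Finset.prod_const, Finset.card_range]
    · rw [Finset.prod_congr rfl (fun i _ => if_neg (by omega)),
        Finset.prod_const, Finset.card_range]
  refine Eq.trans (Finset.prod_congr rfl (fun c _ => ?_)) hfin
  convert (hblock c).trans (h2 c) using 2

theorem stmt_5 (n r s : ℕ) (hn : 0 < n) (hr : 0 < r) (hs : 0 < s)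
    (hng : 1 ≤ n / Nat.gcd r s) :
    (Tg n r s).charpoly =
      (Tg (n / Nat.gcd r s + 1) (r / Nat.gcd r s) (s / Nat.gcd r s)).charpoly
          ^ (n % Nat.gcd r s) *
        (Tg (n / Nat.gcd r s) (r / Nat.gcd r s) (s / Nat.gcd r s)).charpoly
          ^ (Nat.gcd r s - n % Nat.gcd r s) := by
  have hγ : 0 < Nat.gcd r s := Nat.gcd_pos_of_pos_left s hr
  have hβ : n % Nat.gcd r s < Nat.gcd r s := Nat.mod_lt _ hγ
  have h1 : n = (n / Nat.gcd r s) * Nat.gcd r s + n % Nat.gcd r s := (Nat.div_add_mod' n _).symm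
  have h2 : r = (r / Nat.gcd r s) * Nat.gcd r s := (Nat.div_mul_cancel (Nat.gcd_dvd_left r s)).symm
  have h3 : s = (s / Nat.gcd r s) * Nat.gcd r s := (Nat.div_mul_cancel (Nat.gcd_dvd_right r s)).symm
  calc (Tg n r s).charpoly
      = (Tg ((n / Nat.gcd r s) * Nat.gcd r s + n % Nat.gcd r s)
          ((r / Nat.gcd r s) * Nat.gcd r s) ((s / Nat.gcd r s) * Nat.gcd r s)).charpoly :=
        Tg_congr h1 h2 h3
    _ = _ := key (Nat.gcd r s) (r / Nat.gcd r s) (s / Nat.gcd r s) (n / Nat.gcd r s)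
        (n % Nat.gcd r s) hγ hβ hng
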